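/- arXiv:2108.04062 — 3 statements merged into one kernel-verified Lean document; each statement's English description precedes it below -/
import Mathlib

section
/- Let g : ℝ^d → ℝ^m be 1-Lipschitz (with respect to the l₂ norms), W ∈ ℝ^{k×m}, b ∈ ℝ^k, and define f : ℝ^d → ℝ^k by f(x) = W g(x) + b. Fix x and a class l with f_l(x) > f_i(x) for all i ≠ l (where W_{i,:} ≠ W_{l,:} for i ≠ l). Then for every x* and every i ≠ l with f_l(x*) = f_i(x*), we have ‖x* − x‖₂ ≥ (f_l(x) − f_i(x)) / ‖W_{l,:} − W_{i,:}‖₂. Consequently the l₂ distance from x to the decision boundary is at least min_{i≠l} (f_l(x) − f_i(x)) / ‖W_{l,:} − W_{i,:}‖₂. -/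
theorem stmt0 {d m k : ℕ}
    (g : EuclideanSpace ℝ (Fin d) → EuclideanSpace ℝ (Fin m))
    (hg : LipschitzWith 1 g)
    (W : Matrix (Fin k) (Fin m) ℝ) (b : Fin k → ℝ)
    (f : EuclideanSpace ℝ (Fin d) → Fin k → ℝ)
    (hf : ∀ x i, f x i = (∑ j, W i j * g x j) + b i)
    (x : EuclideanSpace ℝ (Fin d)) (l : Fin k)
    (hl : ∀ i, i ≠ l → f x i < f x l)
    (hW : ∀ i, i ≠ l → W i ≠ W l) :
    ∀ (x' : EuclideanSpace ℝ (Fin d)) (i : Fin k), i ≠ l → f x' l = f x' i →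
      (f x l - f x i) / ‖(show EuclideanSpace ℝ (Fin m) from WithLp.toLp 2 (W l - W i))‖ ≤ ‖x' - x‖ := by
  intro x' i hi hfx'
  set v : EuclideanSpace ℝ (Fin m) := WithLp.toLp 2 (W l - W i : Fin m → ℝ) with hv
  have hvne : v ≠ 0 := by
    intro h
    apply hW i hi
    funext j
    have := congrArg (fun w : EuclideanSpace ℝ (Fin m) => w j) h
    simp [hv, sub_eq_zero] at this
    exact this.symm
  have hvpos : (0:ℝ) < ‖v‖ := norm_pos_iff.mpr hvne
  rw [div_le_iff₀ hvpos]
  have key : f x l - f x i = inner ℝ v (g x - g x' : EuclideanSpace ℝ (Fin m)) := by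
    have h1 : f x l - f x i = (f x l - f x i) - (f x' l - f x' i) := by
      rw [hfx']; ring
    rw [h1, hf, hf, hf, hf, PiLp.inner_apply]
    simp only [RCLike.inner_apply, conj_trivial, PiLp.sub_apply, hv, PiLp.toLp_apply, Pi.sub_apply]
    simp only [sub_mul, mul_sub, Finset.sum_sub_distrib]
    simp only [mul_comm]
    ring
  have hle : f x l - f x i ≤ ‖v‖ * ‖g x - g x'‖ := by
    rw [key]; exact real_inner_le_norm v _
  refine hle.trans ?_
  have := hg.dist_le_mul x x'
  rw [NNReal.coe_one, one_mul, dist_eq_norm, dist_eq_norm] at this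
  calc ‖v‖ * ‖g x - g x'‖ ≤ ‖v‖ * ‖x - x'‖ := by
        exact mul_le_mul_of_nonneg_left this (le_of_lt hvpos)
    _ = ‖x' - x‖ * ‖v‖ := by rw [norm_sub_rev x x']; ring
end

section
/- Let v ∈ ℝ^m with ‖v‖₂ = 1. The Householder activation σ_v(z) = z for vᵀz > 0 and σ_v(z) = (I − 2vvᵀ)z for vᵀz ≤ 0 is 1-Lipschitz: ‖σ_v(z₁) − σ_v(z₂)‖₂ ≤ ‖z₁ − z₂‖₂ for all z₁, z₂ ∈ ℝ^m. -/
open scoped RealInnerProductSpace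

theorem stmt3 {m : ℕ} (v : EuclideanSpace ℝ (Fin m)) (hv : ‖v‖ = 1)
    (σ : EuclideanSpace ℝ (Fin m) → EuclideanSpace ℝ (Fin m))
    (hσ : ∀ z, σ z = if 0 < ∑ j, v j * z j then z else z - (2 * ∑ j, v j * z j) • v) :
    LipschitzWith 1 σ := by
  have hinner : ∀ z : EuclideanSpace ℝ (Fin m), (∑ j, v j * z j) = ⟪v, z⟫ := by
    intro z
    simp [PiLp.inner_apply, RCLike.inner_apply]
    exact Finset.sum_congr rfl (fun _ _ => mul_comm _ _)
  have hexp : ∀ (u : EuclideanSpace ℝ (Fin m)) (c : ℝ),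
      ‖u - c • v‖ ^ 2 = ‖u‖ ^ 2 - 2 * c * ⟪u, v⟫ + c ^ 2 := by
    intro u c
    rw [norm_sub_sq_real, real_inner_smul_right, norm_smul, hv, mul_one,
      Real.norm_eq_abs, sq_abs]
    ring
  have key : ∀ z₁ z₂ : EuclideanSpace ℝ (Fin m), ‖σ z₁ - σ z₂‖ ≤ ‖z₁ - z₂‖ := by
    intro z₁ z₂
    rw [hσ z₁, hσ z₂, hinner z₁, hinner z₂]
    set a := ⟪v, z₁⟫ with ha
    set b := ⟪v, z₂⟫ with hb
    have huv : ⟪z₁ - z₂, v⟫ = a - b := by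
      rw [inner_sub_left, ha, hb, real_inner_comm v z₁, real_inner_comm v z₂]
    have sq_imp : ∀ w : EuclideanSpace ℝ (Fin m),
        ‖w‖ ^ 2 ≤ ‖z₁ - z₂‖ ^ 2 → ‖w‖ ≤ ‖z₁ - z₂‖ := by
      intro w h
      nlinarith [norm_nonneg w, norm_nonneg (z₁ - z₂)]
    split_ifs with h1 h2 h2
    · exact le_refl _
    · -- a > 0, b ≤ 0
      push_neg at h2
      have hrw : z₁ - (z₂ - (2 * b) • v) = (z₁ - z₂) - (-(2 * b)) • v := by module
      apply sq_imp
      rw [hrw, hexp, huv]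
      nlinarith [mul_nonpos_of_nonneg_of_nonpos h1.le h2]
    · -- a ≤ 0, b > 0
      push_neg at h1
      have hrw : z₁ - (2 * a) • v - z₂ = (z₁ - z₂) - (2 * a) • v := by module
      apply sq_imp
      rw [hrw, hexp, huv]
      nlinarith [mul_nonpos_of_nonpos_of_nonneg h1 h2.le]
    · -- both nonpos
      have hrw : z₁ - (2 * a) • v - (z₂ - (2 * b) • v)
          = (z₁ - z₂) - (2 * (a - b)) • v := by module
      apply sq_imp
      rw [hrw, hexp, huv]
      ring_nf
      nlinarith []
  exact LipschitzWith.of_dist_le_mul (fun x y => by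
    rw [NNReal.coe_one, one_mul, dist_eq_norm, dist_eq_norm]; exact key x y)
end

section
/- Let S ⊂ ℝ^m be an open set, let Q₁ ≠ Q₂ be m×m orthogonal matrices, and let v ∈ ℝ^m with ‖v‖₂ = 1 be such that S intersects the hyperplane {z : vᵀz = 0}. Define g : S → ℝ^m by g(z) = Q₁z when vᵀz > 0 and g(z) = Q₂z when vᵀz ≤ 0. Then g is continuous on S if and only if Q₂ = Q₁(I − 2vvᵀ). -/
open Matrix

section Aux

variable {m : ℕ}

private lemma mulVec_cont (Q : Matrix (Fin m) (Fin m) ℝ) :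
    Continuous (fun z : EuclideanSpace ℝ (Fin m) =>
      (show EuclideanSpace ℝ (Fin m) from WithLp.toLp 2 (Q.mulVec z))) := by
  let L : EuclideanSpace ℝ (Fin m) →ₗ[ℝ] EuclideanSpace ℝ (Fin m) :=
    { toFun := fun z => WithLp.toLp 2 (Q.mulVec z),
      map_add' := fun x y => by simp [Matrix.mulVec_add],
      map_smul' := fun c x => by simp [Matrix.mulVec_smul] }
  exact L.continuous_of_finiteDimensional

private lemma dot_cont (v : EuclideanSpace ℝ (Fin m)) :
    Continuous (fun z : EuclideanSpace ℝ (Fin m) => (fun j => v j) ⬝ᵥ (fun j => z j)) := by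
  simp only [dotProduct]
  exact continuous_finset_sum _ fun j _ =>
    continuous_const.mul ((continuous_apply j).comp (PiLp.continuous_ofLp 2 _))

private lemma dot_self_one (v : EuclideanSpace ℝ (Fin m)) (hv : ‖v‖ = 1) :
    (fun j => v j) ⬝ᵥ (fun j => v j) = 1 := by
  have := EuclideanSpace.norm_eq v
  rw [hv] at this
  have h2 : (1:ℝ) = ∑ i, v i ^ 2 := by
    have := congrArg (· ^ 2) this
    simpa [Real.sq_sqrt (Finset.sum_nonneg fun i _ => sq_nonneg (v i))] using this
  simp [dotProduct, ← sq, ← h2]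

private lemma orth_dot (R : Matrix (Fin m) (Fin m) ℝ) (hR : Rᵀ * R = 1) (x y : Fin m → ℝ) :
    R *ᵥ x ⬝ᵥ R *ᵥ y = x ⬝ᵥ y := by
  rw [Matrix.dotProduct_mulVec, ← Matrix.mulVec_transpose, Matrix.mulVec_mulVec, hR,
    Matrix.one_mulVec]

private lemma ext_mulVec (A B : Matrix (Fin m) (Fin m) ℝ) (h : ∀ x, A *ᵥ x = B *ᵥ x) :
    A = B := by
  ext i j
  have := congrFun (h (Pi.single j 1)) i
  simpa [Matrix.mulVec_single] using this

private lemma rank_one_mulVec (a b z : Fin m → ℝ) :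
    Matrix.vecMulVec a b *ᵥ z = (b ⬝ᵥ z) • a := by
  funext i
  simp [Matrix.vecMulVec, Matrix.mulVec, dotProduct, Finset.mul_sum, mul_assoc,
    mul_comm, mul_left_comm]

end Aux

theorem stmt5 {m : ℕ} (S : Set (EuclideanSpace ℝ (Fin m))) (hS : IsOpen S)
    (Q₁ Q₂ : Matrix (Fin m) (Fin m) ℝ)
    (hQ₁ : Q₁ᵀ * Q₁ = 1) (hQ₁' : Q₁ * Q₁ᵀ = 1)
    (hQ₂ : Q₂ᵀ * Q₂ = 1) (hQ₂' : Q₂ * Q₂ᵀ = 1)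
    (hne : Q₁ ≠ Q₂)
    (v : EuclideanSpace ℝ (Fin m)) (hv : ‖v‖ = 1)
    (hmeet : ∃ z ∈ S, ∑ j, v j * z j = 0)
    (g : EuclideanSpace ℝ (Fin m) → EuclideanSpace ℝ (Fin m))
    (hg : ∀ z, g z = if 0 < ∑ j, v j * z j
        then (show EuclideanSpace ℝ (Fin m) from WithLp.toLp 2 (Q₁.mulVec z))
        else (show EuclideanSpace ℝ (Fin m) from WithLp.toLp 2 (Q₂.mulVec z))) :
    ContinuousOn g S ↔
      Q₂ = Q₁ * (1 - (2:ℝ) • Matrix.vecMulVec (fun j => v j) (fun j => v j)) := by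
  set vv : Fin m → ℝ := fun j => v j with hvv
  have hdotsum : ∀ z : EuclideanSpace ℝ (Fin m), (∑ j, v j * z j) = vv ⬝ᵥ (fun j => z j) := by
    intro z; rfl
  have hvvone : vv ⬝ᵥ vv = 1 := dot_self_one v hv
  constructor
  · -- forward direction
    intro hcont
    obtain ⟨z₀, hz₀S, hz₀⟩ := hmeet
    -- Step 1: agreement on S ∩ hyperplane
    have hagree : ∀ z ∈ S, vv ⬝ᵥ (fun j => z j) = 0 → Q₁ *ᵥ z = Q₂ *ᵥ z := by
      intro z hzS hz
      set φ : ℝ → EuclideanSpace ℝ (Fin m) := fun t => z + t • v with hφ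
      have hφcont : Continuous φ := continuous_const.add (continuous_id.smul continuous_const)
      have hφ0 : φ 0 = z := by simp [hφ]
      have hφtendsto : Filter.Tendsto φ (nhdsWithin 0 (Set.Ioi 0)) (nhds z) := by
        have := hφcont.tendsto 0
        rw [hφ0] at this
        exact this.mono_left nhdsWithin_le_nhds
      have hmemS : ∀ᶠ t in nhdsWithin (0:ℝ) (Set.Ioi 0), φ t ∈ S := by
        have : ∀ᶠ t in nhdsWithin (0:ℝ) (Set.Ioi 0), φ t ∈ S :=
          hφtendsto.eventually (hS.eventually_mem hzS)
        exact this
      have hdotφ : ∀ t : ℝ, (∑ j, v j * (φ t) j) = t := by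
        intro t
        have : (fun j => (φ t) j) = (fun j => z j) + t • vv := by
          funext j; simp [hφ, vv]
        rw [hdotsum, this, dotProduct_add, dotProduct_smul, hz, hvvone]
        simp
      have hgφ : ∀ t ∈ Set.Ioi (0:ℝ), g (φ t) = WithLp.toLp 2 (Q₁ *ᵥ (φ t)) := by
        intro t ht
        rw [hg, if_pos]
        rw [hdotφ t]; exact ht
      have htendS : Filter.Tendsto φ (nhdsWithin 0 (Set.Ioi 0)) (nhdsWithin z S) := by
        rw [tendsto_nhdsWithin_iff]
        exact ⟨hφtendsto, hmemS⟩
      have h1 : Filter.Tendsto (fun t => g (φ t)) (nhdsWithin 0 (Set.Ioi 0)) (nhds (g z)) :=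
        (hcont z hzS).tendsto.comp htendS
      have h2 : Filter.Tendsto (fun t => g (φ t)) (nhdsWithin 0 (Set.Ioi 0))
          (nhds (show EuclideanSpace ℝ (Fin m) from WithLp.toLp 2 (Q₁ *ᵥ z))) := by
        have hlim : Filter.Tendsto (fun t => (show EuclideanSpace ℝ (Fin m) from WithLp.toLp 2 (Q₁ *ᵥ (φ t))))
            (nhdsWithin 0 (Set.Ioi 0)) (nhds (show EuclideanSpace ℝ (Fin m) from WithLp.toLp 2 (Q₁ *ᵥ z))) :=
          ((mulVec_cont Q₁).tendsto z).comp hφtendsto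
        refine hlim.congr' ?_
        filter_upwards [self_mem_nhdsWithin] with t ht
        exact (hgφ t ht).symm
      have hgz : g z = WithLp.toLp 2 (Q₂ *ᵥ z) := by
        rw [hg, if_neg]
        rw [hdotsum, hz]; simp
      have := tendsto_nhds_unique h1 h2
      rw [hgz] at this
      exact congrArg WithLp.ofLp this.symm
    -- agreement at z₀
    have hz₀' : vv ⬝ᵥ (fun j => z₀ j) = 0 := by rw [← hdotsum]; exact hz₀
    have hA0 : Q₁ *ᵥ z₀ = Q₂ *ᵥ z₀ := hagree z₀ hz₀S hz₀'
    -- Step 2: agreement on the whole hyperplane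
    obtain ⟨ε, hε, hball⟩ := Metric.isOpen_iff.mp hS z₀ hz₀S
    have hfixQ : ∀ w : EuclideanSpace ℝ (Fin m), vv ⬝ᵥ (fun j => w j) = 0 →
        Q₁ *ᵥ w = Q₂ *ᵥ w := by
      intro w hw
      by_cases hw0 : w = 0
      · subst hw0
        show Q₁ *ᵥ (0 : Fin m → ℝ) = Q₂ *ᵥ (0 : Fin m → ℝ)
        simp [Matrix.mulVec_zero]
      · have hnw : (0:ℝ) < ‖w‖ := norm_pos_iff.mpr hw0
        set δ : ℝ := ε / (2 * ‖w‖) with hδ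
        have hδpos : 0 < δ := div_pos hε (by positivity)
        have hmem : z₀ + δ • w ∈ S := by
          apply hball
          rw [Metric.mem_ball, dist_eq_norm]
          have : z₀ + δ • w - z₀ = δ • w := by abel
          rw [this, norm_smul]
          rw [Real.norm_eq_abs, abs_of_pos hδpos, hδ]
          rw [div_mul_eq_mul_div, mul_comm]
          rw [div_lt_iff₀ (by positivity)]
          nlinarith
        have hdot : vv ⬝ᵥ (fun j => (z₀ + δ • w) j) = 0 := by
          have : (fun j => (z₀ + δ • w) j) = (fun j => z₀ j) + δ • (fun j => w j) := by
            funext j; simp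
          rw [this, dotProduct_add, dotProduct_smul, hz₀', hw]
          simp
        have h1 : Q₁ *ᵥ (z₀ + δ • w) = Q₂ *ᵥ (z₀ + δ • w) := hagree _ hmem hdot
        have h2 : (fun j => ((z₀:EuclideanSpace ℝ (Fin m)) + δ • w) j)
            = (fun j => z₀ j) + δ • (fun j => w j) := by funext j; simp
        rw [show ((z₀:EuclideanSpace ℝ (Fin m)) + δ • w : Fin m → ℝ)
            = (fun j => z₀ j) + δ • (fun j => w j) from h2] at h1
        rw [Matrix.mulVec_add, Matrix.mulVec_add, Matrix.mulVec_smul, Matrix.mulVec_smul,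
          hA0] at h1
        have := add_left_cancel h1
        exact smul_right_injective _ (ne_of_gt hδpos) this
    -- set R := Q₁ᵀ * Q₂
    set R : Matrix (Fin m) (Fin m) ℝ := Q₁ᵀ * Q₂ with hR
    have hRorth : Rᵀ * R = 1 := by
      rw [hR, Matrix.transpose_mul, Matrix.transpose_transpose, Matrix.mul_assoc,
        ← Matrix.mul_assoc Q₁, hQ₁', Matrix.one_mul, hQ₂]
    have hQ₁R : Q₁ * R = Q₂ := by
      rw [hR, ← Matrix.mul_assoc, hQ₁', Matrix.one_mul]
    have hfix : ∀ w : Fin m → ℝ, vv ⬝ᵥ w = 0 → R *ᵥ w = w := by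
      intro w hw
      have : Q₁ *ᵥ w = Q₂ *ᵥ w := hfixQ (WithLp.toLp 2 w) hw
      rw [hR, ← Matrix.mulVec_mulVec, ← this, Matrix.mulVec_mulVec, hQ₁, Matrix.one_mulVec]
    -- R v = ± v
    set u : Fin m → ℝ := R *ᵥ vv with hu
    have huw : ∀ w : Fin m → ℝ, vv ⬝ᵥ w = 0 → u ⬝ᵥ w = 0 := by
      intro w hw
      calc u ⬝ᵥ w = (R *ᵥ vv) ⬝ᵥ (R *ᵥ w) := by rw [hfix w hw]
        _ = vv ⬝ᵥ w := orth_dot R hRorth vv w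
        _ = 0 := hw
    set c : ℝ := u ⬝ᵥ vv with hc
    have hucv : u = c • vv := by
      set w : Fin m → ℝ := u - c • vv with hw
      have hvw : vv ⬝ᵥ w = 0 := by
        rw [hw, dotProduct_sub, dotProduct_smul, hvvone,
          dotProduct_comm, ← hc]
        simp
      have huwz : u ⬝ᵥ w = 0 := huw w hvw
      have hww : w ⬝ᵥ w = 0 := by
        rw [hw, sub_dotProduct, huwz, smul_dotProduct, hvw]
        simp
      have : w = 0 := dotProduct_self_eq_zero.mp hww
      rw [hw] at this
      have := sub_eq_zero.mp this
      exact this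
    have hc2 : c ^ 2 = 1 := by
      have huu : u ⬝ᵥ u = 1 := by
        rw [hu, orth_dot R hRorth vv vv, hvvone]
      rw [hucv, smul_dotProduct, dotProduct_smul, hvvone] at huu
      simpa [sq] using huu
    have hcval : c = 1 ∨ c = -1 := by
      have h : (c - 1) * (c + 1) = 0 := by nlinarith [hc2]
      rcases mul_eq_zero.mp h with h | h
      · left; linarith
      · right; linarith
    have hdecomp : ∀ z : Fin m → ℝ,
        R *ᵥ z = (vv ⬝ᵥ z) • u + (z - (vv ⬝ᵥ z) • vv) := by
      intro z
      have hwz : vv ⬝ᵥ (z - (vv ⬝ᵥ z) • vv) = 0 := by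
        rw [dotProduct_sub, dotProduct_smul, hvvone]; simp
      have hfw := hfix _ hwz
      have hzdec : z = (vv ⬝ᵥ z) • vv + (z - (vv ⬝ᵥ z) • vv) := by module
      calc R *ᵥ z = R *ᵥ ((vv ⬝ᵥ z) • vv + (z - (vv ⬝ᵥ z) • vv)) := by
            rw [← hzdec]
        _ = (vv ⬝ᵥ z) • (R *ᵥ vv) + (z - (vv ⬝ᵥ z) • vv) := by
            rw [Matrix.mulVec_add, Matrix.mulVec_smul, hfw]
        _ = _ := by rw [← hu]
    rcases hcval with hc1 | hcm1
    · -- c = 1 leads to contradiction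
      exfalso
      apply hne
      have hR1 : R = 1 := by
        apply ext_mulVec
        intro z
        rw [hdecomp z, hucv, hc1, one_smul, Matrix.one_mulVec]
        abel
      rw [← hQ₁R, hR1, Matrix.mul_one]
    · -- c = -1
      have hRT : R = 1 - (2:ℝ) • Matrix.vecMulVec vv vv := by
        apply ext_mulVec
        intro z
        rw [hdecomp z, hucv, hcm1, Matrix.sub_mulVec, Matrix.one_mulVec,
          Matrix.smul_mulVec, rank_one_mulVec]
        rw [neg_one_smul, smul_neg, smul_smul, two_mul, add_smul]
        abel
      rw [← hQ₁R, hRT]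
  · -- reverse direction
    intro hQeq
    have hgcont : Continuous g := by
      have hgdef : g = fun (z : EuclideanSpace ℝ (Fin m)) => if 0 < ∑ j, v j * z j
          then (show EuclideanSpace ℝ (Fin m) from WithLp.toLp 2 (Q₁.mulVec z))
          else (show EuclideanSpace ℝ (Fin m) from WithLp.toLp 2 (Q₂.mulVec z)) := funext hg
      rw [hgdef]
      apply Continuous.if
      · intro z hzf
        have hsub : frontier {z : EuclideanSpace ℝ (Fin m) | 0 < ∑ j, v j * z j}
            ⊆ {z : EuclideanSpace ℝ (Fin m) | (0:ℝ) = ∑ j, v j * z j} := by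
          have : Continuous (fun z : EuclideanSpace ℝ (Fin m) => ∑ j, v j * z j) := by
            have := dot_cont v
            simpa [dotProduct] using this
          exact frontier_lt_subset_eq continuous_const this
        have hz0 : (0:ℝ) = ∑ j, v j * z j := hsub hzf
        have hdz : vv ⬝ᵥ (fun j => z j) = 0 := by rw [← hdotsum]; exact hz0.symm
        show WithLp.toLp 2 (Q₁ *ᵥ z) = WithLp.toLp 2 (Q₂ *ᵥ z)
        congr 1
        rw [hQeq, ← Matrix.mulVec_mulVec, Matrix.sub_mulVec, Matrix.one_mulVec,
          Matrix.smul_mulVec, rank_one_mulVec, hdz]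
        simp
      · exact mulVec_cont Q₁
      · exact mulVec_cont Q₂
    exact hgcont.continuousOn
end
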